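/- arXiv:1604.02449 — 2 statements merged into one kernel-verified Lean document; each statement's English description precedes it below -/
import Mathlib

section
/- Let λ, ξ, γ > 0 and define A(z) = ∫₀^z e^{-(λ/ξ)s}(1-s)^{γ/ξ-1} ds, A = A(1), and P₀(z) = p·e^{(λ/ξ)z}(1-z)^{-γ/ξ}[1 - A(z)/A] for p > 0 and z ∈ [0,1). Then the limit of P₀(z) as z → 1⁻ exists and equals p·ξ/(γA). -/
open Filter Set intervalIntegral Real MeasureTheory

/-- For P₀(z) = p e^{(λ/ξ)z}(1-z)^{-γ/ξ}[1 - A(z)/A], the limit as z → 1⁻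
exists and equals pξ/(γA). -/
theorem stmt3 (lam xi gam p : ℝ) (hlam : 0 < lam) (hxi : 0 < xi)
    (hgam : 0 < gam) (hp : 0 < p) :
    Filter.Tendsto
      (fun z : ℝ => p * Real.exp ((lam/xi) * z) * (1 - z) ^ (-(gam/xi)) *
        (1 - (∫ s in (0:ℝ)..z, Real.exp (-(lam/xi) * s) * (1 - s) ^ (gam/xi - 1)) /
             (∫ s in (0:ℝ)..1, Real.exp (-(lam/xi) * s) * (1 - s) ^ (gam/xi - 1))))
      (nhdsWithin 1 (Set.Iio 1))
      (nhds (p * xi /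
        (gam * ∫ s in (0:ℝ)..1, Real.exp (-(lam/xi) * s) * (1 - s) ^ (gam/xi - 1)))) := by
  set a := lam / xi with ha
  set b := gam / xi with hb
  have hbpos : 0 < b := div_pos hgam hxi
  set φ : ℝ → ℝ := fun s => Real.exp (-a * s) * (1 - s) ^ (b - 1) with hφ
  -- integrability of φ on any interval
  have hint : ∀ u v : ℝ, IntervalIntegrable φ volume u v := by
    intro u v
    have h1 : IntervalIntegrable (fun s : ℝ => (1 - s) ^ (b - 1)) volume u v := by
      have := (intervalIntegrable_rpow' (a := 1 - u) (b := 1 - v)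
        (r := b - 1) (by linarith)).comp_sub_left 1
      simpa using this
    exact h1.continuousOn_mul (Real.continuous_exp.comp (by fun_prop)).continuousOn
  set A : ℝ := ∫ s in (0:ℝ)..1, φ s with hA
  have hApos : 0 < A := by
    refine intervalIntegral.intervalIntegral_pos_of_pos_on (hint 0 1) ?_ one_pos
    intro x hx
    exact mul_pos (Real.exp_pos _) (Real.rpow_pos_of_pos (by linarith [hx.2]) _)
  have hAne : A ≠ 0 := ne_of_gt hApos
  set F : ℝ → ℝ := fun z => A - ∫ s in (0:ℝ)..z, φ s with hF
  set G : ℝ → ℝ := fun z => (1 - z) ^ b with hG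
  -- L'Hôpital
  have hFG : Tendsto (fun z => F z / G z) (nhdsWithin 1 (Set.Iio 1))
      (nhds (Real.exp (-a) / b)) := by
    refine HasDerivAt.lhopital_zero_left_on_Ioc (a := 0) (b := (1:ℝ))
      (f' := fun x => -φ x) (g' := fun x => -1 * (b * (1 - x) ^ (b - 1)))
      one_pos ?_ ?_ ?_ ?_ ?_ ?_ ?_ ?_
    · intro x hx
      have hprim : HasDerivAt (fun z => ∫ s in (0:ℝ)..z, φ s) (φ x) x := by
        refine intervalIntegral.integral_hasDerivAt_right (hint 0 x) ?_ ?_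
        · exact (Measurable.stronglyMeasurable (by fun_prop)).stronglyMeasurableAtFilter
        · have : ContinuousAt (fun s : ℝ => (1 - s) ^ (b - 1)) x := by
            apply ContinuousAt.rpow_const (by fun_prop)
            exact Or.inl (by simp; linarith [hx.2])
          exact (Real.continuous_exp.continuousAt.comp (by fun_prop)).mul this
      have := (hasDerivAt_const x A).sub hprim
      rw [zero_sub] at this
      exact this
    · intro x hx
      have h1 : HasDerivAt (fun z : ℝ => 1 - z) (-1) x := by
        have := (hasDerivAt_const x (1:ℝ)).sub (hasDerivAt_id x)
        rw [zero_sub] at this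
        exact this
      have := h1.rpow_const (p := b) (Or.inl (by simp; linarith [hx.2]))
      simpa [mul_comm, mul_assoc] using this
    · -- ContinuousOn F (Ioc 0 1)
      refine (continuousOn_const.sub ?_).mono (α := ℝ) (s := uIcc (0:ℝ) 1)
        (by rw [uIcc_of_le zero_le_one]; exact Ioc_subset_Icc_self)
      exact intervalIntegral.continuousOn_primitive_interval'
        (hint 0 1) left_mem_uIcc
    · -- ContinuousOn G (Ioc 0 1)
      exact fun x hx => ((continuousOn_const.sub continuousOn_id).rpow_const
        (fun y hy => Or.inr hbpos.le)) x hx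
    · intro x hx
      have : (0:ℝ) < 1 - x := by linarith [hx.2]
      have h2 : (1 - x) ^ (b - 1) ≠ 0 := ne_of_gt (Real.rpow_pos_of_pos this _)
      simp [h2, hbpos.ne']
    · simp [hF, hA]
    · simp [hG, Real.zero_rpow hbpos.ne']
    · -- Tendsto f'/g'
      have heq : ∀ x ∈ Set.Iio (1:ℝ),
          Real.exp (-a * x) / b = -φ x / (-1 * (b * (1 - x) ^ (b - 1))) := by
        intro x hx
        have hpos : (0:ℝ) < 1 - x := by simp at hx; linarith
        have h2 : (1 - x) ^ (b - 1) ≠ 0 := ne_of_gt (Real.rpow_pos_of_pos hpos _)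
        field_simp [hφ]
        simp only [hφ]
        ring_nf
      refine Tendsto.congr' (eventuallyEq_of_mem self_mem_nhdsWithin heq) ?_
      have : ContinuousAt (fun x : ℝ => Real.exp (-a * x) / b) 1 := by fun_prop
      simpa using this.continuousWithinAt.tendsto
  -- assemble
  have hmul : Tendsto (fun z => (p * Real.exp (a * z) / A) * (F z / G z))
      (nhdsWithin 1 (Set.Iio 1))
      (nhds ((p * Real.exp (a * 1) / A) * (Real.exp (-a) / b))) := by
    refine Tendsto.mul ?_ hFG
    have : ContinuousAt (fun z : ℝ => p * Real.exp (a * z) / A) 1 := by fun_prop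
    exact this.continuousWithinAt.tendsto
  have hval : (p * Real.exp (a * 1) / A) * (Real.exp (-a) / b) = p * xi / (gam * A) := by
    have he : Real.exp (a * 1) * (Real.exp a)⁻¹ = 1 := by
      rw [mul_one, mul_inv_cancel₀ (Real.exp_pos a).ne']
    rw [hb, Real.exp_neg, div_mul_div_comm, mul_assoc, he, mul_one]
    field_simp
  rw [← hval]
  refine hmul.congr' (eventuallyEq_of_mem self_mem_nhdsWithin ?_)
  intro z hz
  have hpos : (0:ℝ) < 1 - z := by simp at hz; linarith
  have hGz : (0:ℝ) < (1 - z) ^ b := Real.rpow_pos_of_pos hpos _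
  have hneg : (1 - z) ^ (-b) = ((1 - z) ^ b)⁻¹ := Real.rpow_neg hpos.le _
  simp only [hF, hG]
  rw [hneg]
  field_simp
end

section
/- Let γ, ξ, μ > 0 and let (S_n)_{n≥0} be given by S_n = (n+1)/(μ+nξ). Define (T_n)_{n≥0} by T₀ = (γ/(γ+ξ))·(1 + γ/μ)·(1/γ) and for n ≥ 1, T_n = 1/(γ+(n+1)ξ) + (γ/(γ+(n+1)ξ))·S_n + (nξ/(γ+(n+1)ξ))·T_{n-1}. Then for every n ≥ 0, T_n = Σ_{k=0}^{n} [ξ^{n-k}·(n!/k!)/∏_{j=k+1}^{n+1}(γ+jξ)]·((k+1)γ/(μ+kξ) + 1). -/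
open Finset

/-- Solution of the vacation-period sojourn-time recursion:
T₀ = (γ/(γ+ξ))(1+γ/μ)(1/γ),
T_n = 1/(γ+(n+1)ξ) + (γ/(γ+(n+1)ξ))S_n + (nξ/(γ+(n+1)ξ))T_{n-1},
with S_n = (n+1)/(μ+nξ), is
T_n = Σ_{k=0}^n [ξ^{n-k}(n!/k!)/∏_{j=k+1}^{n+1}(γ+jξ)]·((k+1)γ/(μ+kξ)+1). -/
theorem stmt8 (gam xi mu : ℝ) (hgam : 0 < gam) (hxi : 0 < xi) (hmu : 0 < mu)
    (S T : ℕ → ℝ)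
    (hS : ∀ n : ℕ, S n = (n + 1) / (mu + n * xi))
    (hT0 : T 0 = (gam / (gam + xi)) * (1 + gam / mu) * (1 / gam))
    (hTrec : ∀ n : ℕ, 1 ≤ n →
      T n = 1 / (gam + (n + 1) * xi) + (gam / (gam + (n + 1) * xi)) * S n +
        (n * xi / (gam + (n + 1) * xi)) * T (n - 1)) :
    ∀ n : ℕ, T n = ∑ k ∈ Finset.range (n + 1),
      (xi ^ (n - k) * ((n.factorial : ℝ) / (k.factorial : ℝ)) /
        ∏ j ∈ Finset.Icc (k + 1) (n + 1), (gam + (j : ℝ) * xi)) *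
      ((k + 1) * gam / (mu + k * xi) + 1) := by
  have hpos : ∀ a b : ℕ, 0 < ∏ j ∈ Finset.Icc a b, (gam + (j : ℝ) * xi) := by
    intro a b
    apply Finset.prod_pos
    intro j _
    positivity
  intro n
  induction n with
  | zero =>
      simp only [Finset.range_one, Finset.sum_singleton, hT0, Nat.zero_add,
        Finset.Icc_self, Finset.prod_singleton, Nat.factorial_zero, Nat.sub_self, pow_zero]
      have h1 : gam + xi ≠ 0 := by positivity
      have h2 : gam + (1:ℝ) * xi ≠ 0 := by positivity
      push_cast
      field_simp
      ring
  | succ m ih =>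
      have hD : (0:ℝ) < gam + ((m:ℝ) + 1 + 1) * xi := by positivity
      rw [hTrec (m + 1) (by omega)]
      simp only [Nat.add_sub_cancel] at *
      rw [ih, hS]
      push_cast
      have hlast : (xi ^ (m + 1 - (m + 1)) * (((m+1).factorial : ℝ) / ((m+1).factorial : ℝ)) /
          ∏ j ∈ Finset.Icc (m + 1 + 1) (m + 1 + 1), (gam + (j : ℝ) * xi)) *
          (((m:ℝ) + 1 + 1) * gam / (mu + ((m:ℝ)+1) * xi) + 1)
          = 1 / (gam + ((m:ℝ) + 1 + 1) * xi) +
            gam / (gam + ((m:ℝ) + 1 + 1) * xi) * (((m:ℝ) + 1 + 1) / (mu + ((m:ℝ) + 1) * xi)) := by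
        rw [Nat.sub_self, Finset.Icc_self, Finset.prod_singleton]
        have hfact : ((m+1).factorial : ℝ) ≠ 0 := by positivity
        have hmu' : (0:ℝ) < mu + ((m:ℝ)+1) * xi := by positivity
        push_cast
        field_simp
        ring
      have hsum : ∀ k ∈ Finset.range (m + 1),
          (xi ^ (m + 1 - k) * (((m+1).factorial : ℝ) / (k.factorial : ℝ)) /
            ∏ j ∈ Finset.Icc (k + 1) (m + 1 + 1), (gam + (j : ℝ) * xi)) *
            (((k:ℝ) + 1) * gam / (mu + (k:ℝ) * xi) + 1)
          = (((m:ℝ)+1) * xi / (gam + ((m:ℝ) + 1 + 1) * xi)) *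
            ((xi ^ (m - k) * ((m.factorial : ℝ) / (k.factorial : ℝ)) /
              ∏ j ∈ Finset.Icc (k + 1) (m + 1), (gam + (j : ℝ) * xi)) *
             (((k:ℝ) + 1) * gam / (mu + (k:ℝ) * xi) + 1)) := by
        intro k hk
        rw [Finset.mem_range] at hk
        have hkm : k ≤ m := by omega
        rw [Finset.prod_Icc_succ_top (by omega : k + 1 ≤ m + 1 + 1)]
        rw [show m + 1 - k = (m - k) + 1 by omega, pow_succ]
        have hP := hpos (k+1) (m+1)
        have hfk : (0:ℝ) < (k.factorial : ℝ) := by positivity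
        have hfm : (0:ℝ) < (m.factorial : ℝ) := by positivity
        rw [Nat.factorial_succ]
        push_cast
        field_simp
      conv_rhs => rw [Finset.sum_range_succ, Finset.sum_congr rfl hsum, ← Finset.mul_sum]
      push_cast at hlast ⊢
      rw [hlast]
      ring
end
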